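/- Let c be an orthogonal transformation of ℝⁿ with I − c invertible, μ = 2(I−c)⁻¹, and τ a unit vector. Then μ(τ) is fixed by the composite R(τ)∘c, where R(τ) is the reflection in the hyperplane τ^⊥. -/

import Mathlib

open scoped RealInnerProductSpace

noncomputable section

/-- The reflection in the hyperplane `τ^⊥`:  `R(τ)(x) = x - 2(x·τ)τ`. -/
def reflect {n : ℕ} (τ x : EuclideanSpace ℝ (Fin n)) : EuclideanSpace ℝ (Fin n) :=
  x - (2 * ⟪x, τ⟫) • τ

/-- Let `c` be an orthogonal transformation of `ℝⁿ` with `I - c` invertible,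
`μ = 2 (I - c)⁻¹`, and `τ` a unit vector.  Then `μ(τ)` is fixed by `R(τ) ∘ c`,
where `R(τ)` is the reflection in the hyperplane `τ^⊥`. -/
theorem stmt_4 {n : ℕ} (c : EuclideanSpace ℝ (Fin n) ≃ₗᵢ[ℝ] EuclideanSpace ℝ (Fin n))
    (μ : EuclideanSpace ℝ (Fin n) →ₗ[ℝ] EuclideanSpace ℝ (Fin n))
    (hμ₁ : ∀ x, μ x - c (μ x) = (2 : ℝ) • x)
    (hμ₂ : ∀ x, μ (x - c x) = (2 : ℝ) • x)
    (τ : EuclideanSpace ℝ (Fin n)) (hτ : ‖τ‖ = 1) :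
    reflect τ (c (μ τ)) = μ τ := by
  have h1 : c (μ τ) = μ τ - (2 : ℝ) • τ := by
    have := hμ₁ τ
    have : c (μ τ) = μ τ - (2 : ℝ) • τ := by
      rw [eq_sub_iff_add_eq, ← eq_sub_iff_add_eq']
      exact this.symm ▸ rfl
    exact this
  have hττ : ⟪τ, τ⟫ = 1 := by
    rw [real_inner_self_eq_norm_sq, hτ]; norm_num
  have hnorm : ‖c (μ τ)‖ = ‖μ τ‖ := c.norm_map _
  have hinner : ⟪μ τ, τ⟫ = 1 := by
    have h2 : ‖μ τ - (2 : ℝ) • τ‖ ^ 2 = ‖μ τ‖ ^ 2 := by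
      rw [← h1, hnorm]
    rw [norm_sub_sq_real] at h2
    rw [real_inner_smul_right, norm_smul, hτ] at h2
    norm_num at h2
    simp only [PiLp.inner_apply, RCLike.inner_apply, conj_trivial] at h2 ⊢
    linarith
  have hcτ : ⟪c (μ τ), τ⟫ = -1 := by
    rw [h1, inner_sub_left, real_inner_smul_left, hττ, hinner]
    ring
  rw [reflect, hcτ, h1]
  module
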